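/- Suppose the full dynamics has the form dx^s/dt = v(x^s) + ∑_b (x_b - x*_b(x^s)) f^0_b(x^s) and dx^b/dt depends on x^b only through J(x^s)(x^b - x*(x^s)) for an x^s-dependent matrix J and differentiable map x*. Define x̃_b = x_b - x*_b(x^s). Then x̃ satisfies dx̃_b/dt = c_b(x^s) + ∑_{b'} x̃_{b'} l_{b'b}(x^s), where c_b(x^s) = ∑_{s'} [ -∂x*_b/∂x_{s'} ] v_{s'}(x^s) and l_{b'b}(x^s) = J_{b b'}(x^s) - ∑_{s'} (∂x*_{b}/∂x_{s'}) f^0_{b' s'}(x^s) appropriately indexed; consequently, if x̃(0) = 0 then x̃(t) coincides for all t with the self-consistent memory variables m(t) solving dm_b/dt = c_b(x^s) + ∑_{b'} m_{b'} l_{b'b}(x^s), m(0)=0, and the reduced self-consistent ZMs equations reproduce the full subnetwork dynamics exactly. -/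

import Mathlib

open Matrix

open Set in
lemma uniq_lin_ode {E : Type*} [NormedAddCommGroup E] [NormedSpace ℝ E]
    (A : ℝ → (E →L[ℝ] E)) (hA : Continuous A)
    (f g : ℝ → E)
    (hf : ∀ t, HasDerivAt f (A t (f t)) t)
    (hg : ∀ t, HasDerivAt g (A t (g t)) t)
    (h0 : f 0 = g 0) : ∀ t, f t = g t := by
  intro t
  set T : ℝ := |t| + 1 with hT
  have hTpos : 0 < T := by positivity
  have htmem : t ∈ Icc (-T) T := by
    constructor
    · nlinarith [abs_nonneg t, neg_abs_le t]
    · nlinarith [le_abs_self t]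
  have h0mem : (0:ℝ) ∈ Ioo (-T) T := by constructor <;> linarith
  set cl : ℝ → ℝ := fun u => min (max u (-T)) T with hcl
  have hclmem : ∀ u, cl u ∈ Icc (-T) T := fun u =>
    ⟨le_min (le_max_right _ _) (by linarith), min_le_right _ _⟩
  have hcleq : ∀ u ∈ Ioo (-T) T, cl u = u := by
    intro u hu
    simp only [hcl]
    rw [max_eq_left hu.1.le, min_eq_left hu.2.le]
  obtain ⟨C, hC⟩ := (isCompact_Icc (a := -T) (b := T)).exists_bound_of_continuousOn
    (hA.continuousOn)
  set K : NNReal := ⟨max C 0, le_max_right _ _⟩ with hK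
  set V : ℝ → E → E := fun u y => A (cl u) y with hV
  have hv : ∀ u, LipschitzOnWith K (V u) univ := by
    intro u
    apply LipschitzWith.lipschitzOnWith
    apply (A (cl u)).lipschitz.weaken
    have := hC _ (hclmem u)
    rw [← NNReal.coe_le_coe, coe_nnnorm]
    exact le_trans this (le_max_left _ _)
  have := ODE_solution_unique_of_mem_Icc (fun u _ => hv u) h0mem
    (fun u _ => (hf u).continuousAt.continuousWithinAt)
    (fun u hu => by rw [hV]; simp only; rw [hcleq u hu]; exact hf u)
    (fun _ _ => mem_univ _)
    (fun u _ => (hg u).continuousAt.continuousWithinAt)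
    (fun u hu => by rw [hV]; simp only; rw [hcleq u hu]; exact hg u)
    (fun _ _ => mem_univ _) h0
  exact this htmem

/-- The linear map sending a coefficient array `M` to the continuous linear map
`y ↦ fun b => ∑ b', y b' * M b' b`. -/
noncomputable def rowMulCLM (B : ℕ) :
    (Fin B → Fin B → ℝ) →ₗ[ℝ] ((Fin B → ℝ) →L[ℝ] (Fin B → ℝ)) where
  toFun M := LinearMap.toContinuousLinearMap
    { toFun := fun y b => ∑ b', y b' * M b' b
      map_add' := by
        intro y z; funext b
        simp [add_mul, Finset.sum_add_distrib]
      map_smul' := by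
        intro r y; funext b
        simp [Finset.mul_sum, mul_assoc] }
  map_add' := by
    intro M N; ext y b
    simp [mul_add, Finset.sum_add_distrib]
  map_smul' := by
    intro r M; ext y b
    simp [Finset.mul_sum]
    ring_nf
    congr 1; funext b'; ring

@[simp] lemma rowMulCLM_apply (B : ℕ) (M : Fin B → Fin B → ℝ) (y : Fin B → ℝ) (b : Fin B) :
    rowMulCLM B M y b = ∑ b', y b' * M b' b := rfl

lemma alg_aux {S B : ℕ} (Jb : Fin B → ℝ) (D vv : Fin S → ℝ)
    (f : Fin B → Fin S → ℝ) (x : Fin B → ℝ) :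
    (-∑ s, D s * vv s) + ∑ b', x b' * (Jb b' - ∑ s, D s * f b' s)
      = ∑ b', Jb b' * x b' - ∑ s, (vv s + ∑ b', x b' * f b' s) * D s := by
  have hP : ∑ b', x b' * Jb b' = ∑ b', Jb b' * x b' :=
    Finset.sum_congr rfl fun _ _ => mul_comm _ _
  have hA : ∑ s, D s * vv s = ∑ s, vv s * D s :=
    Finset.sum_congr rfl fun _ _ => mul_comm _ _
  have hQ : ∑ b', x b' * ∑ s, D s * f b' s = ∑ s, (∑ b', x b' * f b' s) * D s := by
    simp_rw [Finset.mul_sum, Finset.sum_mul]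
    rw [Finset.sum_comm]
    exact Finset.sum_congr rfl fun s _ => Finset.sum_congr rfl fun b' _ => by ring
  simp only [mul_sub, Finset.sum_sub_distrib, add_mul, Finset.sum_add_distrib]
  rw [hP, hA, hQ]
  ring

/-- Exactness of the self-consistent ZMs projection for dynamics that are
linear in the bulk variables: the deviation `x̃_b = x_b - x*_b(xˢ)` obeys
`dx̃_b/dt = c_b(xˢ) + ∑_{b'} x̃_{b'} l_{b'b}(xˢ)`, and hence, starting from
`x̃(0) = 0`, coincides with the self-consistent memory variables `m`. -/
theorem stmt3 {S B : ℕ}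
    (v : (Fin S → ℝ) → Fin S → ℝ)
    (f0 : (Fin S → ℝ) → Fin B → Fin S → ℝ)
    (J : (Fin S → ℝ) → Matrix (Fin B) (Fin B) ℝ)
    (xstar : (Fin S → ℝ) → Fin B → ℝ)
    (Dstar : (Fin S → ℝ) → Matrix (Fin B) (Fin S) ℝ)
    (hvC : Continuous v) (hf0C : Continuous f0) (hJC : Continuous J)
    (hDC : Continuous Dstar)
    (hxstar : Differentiable ℝ xstar)
    (hDstar : ∀ p b s, Dstar p b s = fderiv ℝ xstar p (Pi.single s 1) b)
    (c : (Fin S → ℝ) → Fin B → ℝ)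
    (l : (Fin S → ℝ) → Fin B → Fin B → ℝ)
    (hc : ∀ p b, c p b = -∑ s', Dstar p b s' * v p s')
    (hl : ∀ p b' b, l p b' b = J p b b' - ∑ s', Dstar p b s' * f0 p b' s')
    (xs : ℝ → Fin S → ℝ) (xb : ℝ → Fin B → ℝ)
    (hxs : ∀ t s, HasDerivAt (fun u => xs u s)
      (v (xs t) s + ∑ b, (xb t b - xstar (xs t) b) * f0 (xs t) b s) t)
    (hxb : ∀ t b, HasDerivAt (fun u => xb u b)
      (∑ b', J (xs t) b b' * (xb t b' - xstar (xs t) b')) t)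
    (m : ℝ → Fin B → ℝ)
    (hm : ∀ t b, HasDerivAt (fun u => m u b)
      (c (xs t) b + ∑ b', m t b' * l (xs t) b' b) t)
    (hm0 : ∀ b, m 0 b = 0)
    (hqss0 : ∀ b, xb 0 b = xstar (xs 0) b) :
    (∀ t b, HasDerivAt (fun u => xb u b - xstar (xs u) b)
      (c (xs t) b + ∑ b', (xb t b' - xstar (xs t) b') * l (xs t) b' b) t) ∧
    (∀ t b, xb t b - xstar (xs t) b = m t b) := by
  -- Part 1: derivative of the deviation variables
  have part1 : ∀ t b, HasDerivAt (fun u => xb u b - xstar (xs u) b)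
      (c (xs t) b + ∑ b', (xb t b' - xstar (xs t) b') * l (xs t) b' b) t := by
    intro t b
    set xs' : Fin S → ℝ := fun s =>
      v (xs t) s + ∑ b, (xb t b - xstar (xs t) b) * f0 (xs t) b s with hxs'
    have hxsv : HasDerivAt xs xs' t := hasDerivAt_pi.mpr (hxs t)
    have hcomp : HasDerivAt (fun u => xstar (xs u)) (fderiv ℝ xstar (xs t) xs') t :=
      (hxstar (xs t)).hasFDerivAt.comp_hasDerivAt t hxsv
    have hcompb : HasDerivAt (fun u => xstar (xs u) b)
        (fderiv ℝ xstar (xs t) xs' b) t := hasDerivAt_pi.mp hcomp b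
    have hexp : fderiv ℝ xstar (xs t) xs' b = ∑ s, xs' s * Dstar (xs t) b s := by
      have hdecomp : xs' = ∑ s, xs' s • (Pi.single s 1 : Fin S → ℝ) := by
        funext j
        simp [Finset.sum_apply, Pi.single_apply]
      conv_lhs => rw [hdecomp]
      rw [map_sum]
      simp only [_root_.map_smul]
      rw [Finset.sum_apply]
      refine Finset.sum_congr rfl fun s _ => ?_
      rw [hDstar]
      simp [mul_comm]
    have hder := (hxb t b).sub hcompb
    refine HasDerivAt.congr_deriv hder (Eq.symm ?_)
    rw [hexp, hc]
    simp only [hl, hxs']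
    exact alg_aux (fun b' => J (xs t) b b') (fun s => Dstar (xs t) b s)
      (fun s => v (xs t) s) (fun b' s => f0 (xs t) b' s)
      (fun b' => xb t b' - xstar (xs t) b')
  refine ⟨part1, ?_⟩
  -- Part 2: uniqueness
  have hxsC : Continuous xs :=
    continuous_pi fun s => continuous_iff_continuousAt.mpr fun u => (hxs u s).continuousAt
  set L : ℝ → Fin B → Fin B → ℝ := fun t => l (xs t) with hL
  have hlC : Continuous fun p => l p := by
    refine continuous_pi fun b' => continuous_pi fun b => ?_
    simp only [hl]
    refine Continuous.sub ?_ ?_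
    · exact ((continuous_apply b').comp ((continuous_apply b).comp hJC))
    · exact continuous_finset_sum _ fun s _ =>
        (((continuous_apply s).comp ((continuous_apply b).comp hDC))).mul
          (((continuous_apply s).comp ((continuous_apply b').comp hf0C)))
  have hLC : Continuous L := hlC.comp hxsC
  set A : ℝ → ((Fin B → ℝ) →L[ℝ] (Fin B → ℝ)) := fun t => rowMulCLM B (L t) with hA
  have hAC : Continuous A :=
    ((rowMulCLM B).continuous_of_finiteDimensional).comp hLC
  set d : ℝ → Fin B → ℝ := fun t b => (xb t b - xstar (xs t) b) - m t b with hd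
  have hdd : ∀ t, HasDerivAt d (A t (d t)) t := by
    intro t
    apply hasDerivAt_pi.mpr
    intro b
    have h := (part1 t b).sub (hm t b)
    refine HasDerivAt.congr_deriv h (Eq.symm ?_)
    rw [hA]
    simp only [rowMulCLM_apply, hd, hL]
    rw [add_sub_add_left_eq_sub, ← Finset.sum_sub_distrib]
    refine Finset.sum_congr rfl fun b' _ => ?_
    ring
  have hzd : ∀ t, HasDerivAt (fun _ : ℝ => (0 : Fin B → ℝ)) (A t 0) t := by
    intro t
    rw [map_zero]
    exact hasDerivAt_const t 0
  have h0 : d 0 = 0 := by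
    funext b
    simp [hd, hqss0 b, hm0 b]
  have := uniq_lin_ode A hAC d (fun _ => 0) hdd hzd h0
  intro t b
  have ht := congrFun (this t) b
  simpa [hd, sub_eq_zero] using ht
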